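/- Non-negativity of β for bipartite channels: let 𝒩 : M_{d_A d_B}(ℂ) → M_{d_{A'} d_{B'}}(ℂ) be a quantum channel with Choi operator Γ^𝒩 on systems A A' B B'. Suppose λ ≥ 0 and Hermitian operators S, V on A A' B B' satisfy: (1/d_A) Tr_{AA'B'}[S] ≤ λ I_B, T_{BB'}(V + Γ^𝒩) ≥ 0, T_{BB'}(V - Γ^𝒩) ≥ 0, S + V ≥ 0, and S - V ≥ 0. Then λ ≥ 1. -/

import Mathlib

open Matrix
open scoped ComplexOrder

/-- The Choi matrix `Γ^𝒩` of a linear map, on the systems `(A B) × (A' B')`. -/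
noncomputable def choiMatrix {α β : Type*} [Fintype α] [DecidableEq α]
    (P : Matrix α α ℂ →ₗ[ℂ] Matrix β β ℂ) : Matrix (α × β) (α × β) ℂ :=
  Matrix.of fun p q => P (Matrix.single p.1 q.1 1) p.2 q.2

/-- The partial transpose `T_{BB'}` on the systems `B` and `B'`, for an operator on the
four-party system `A A' B B'` indexed as `(A × B) × (A' × B')`. -/
def partialTransposeBB' {dA dB dA' dB' : ℕ}
    (X : Matrix ((Fin dA × Fin dB) × (Fin dA' × Fin dB'))
               ((Fin dA × Fin dB) × (Fin dA' × Fin dB')) ℂ) :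
    Matrix ((Fin dA × Fin dB) × (Fin dA' × Fin dB'))
           ((Fin dA × Fin dB) × (Fin dA' × Fin dB')) ℂ :=
  Matrix.of fun p q =>
    X ((p.1.1, q.1.2), (p.2.1, q.2.2)) ((q.1.1, p.1.2), (q.2.1, p.2.2))

/-- The partial trace over systems `A`, `A'`, and `B'`, leaving an operator on `B`. -/
noncomputable def partialTraceAA'B' {dA dB dA' dB' : ℕ}
    (X : Matrix ((Fin dA × Fin dB) × (Fin dA' × Fin dB'))
               ((Fin dA × Fin dB) × (Fin dA' × Fin dB')) ℂ) :
    Matrix (Fin dB) (Fin dB) ℂ :=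
  Matrix.of fun b e =>
    ∑ a : Fin dA, ∑ a' : Fin dA', ∑ b' : Fin dB',
      X ((a, b), (a', b')) ((a, e), (a', b'))

lemma psd_trace_nonneg {n : Type*} [Fintype n] [DecidableEq n]
    {X : Matrix n n ℂ} (h : X.PosSemidef) : 0 ≤ X.trace := by
  have hdiag : ∀ i, 0 ≤ X i i := by
    intro i
    have := h.diag_nonneg (i := i)
    simpa [dotProduct, Matrix.mulVec, Pi.single_apply, Finset.sum_ite_eq,
      Finset.mul_sum, apply_ite] using this
  exact Finset.sum_nonneg fun i _ => hdiag i

lemma pt_trace {dA dB dA' dB' : ℕ}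
    (X : Matrix ((Fin dA × Fin dB) × (Fin dA' × Fin dB'))
               ((Fin dA × Fin dB) × (Fin dA' × Fin dB')) ℂ) :
    (partialTransposeBB' X).trace = X.trace := by
  simp [Matrix.trace, Matrix.diag, partialTransposeBB']

lemma ptr_trace {dA dB dA' dB' : ℕ}
    (S : Matrix ((Fin dA × Fin dB) × (Fin dA' × Fin dB'))
               ((Fin dA × Fin dB) × (Fin dA' × Fin dB')) ℂ) :
    (partialTraceAA'B' S).trace = S.trace := by
  simp only [Matrix.trace, Matrix.diag, partialTraceAA'B', Matrix.of_apply,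
    Fintype.sum_prod_type]
  rw [Finset.sum_comm]

lemma choi_trace {dA dB dA' dB' : ℕ}
    (N : Matrix (Fin dA × Fin dB) (Fin dA × Fin dB) ℂ →ₗ[ℂ]
         Matrix (Fin dA' × Fin dB') (Fin dA' × Fin dB') ℂ)
    (hTP : ∀ X : Matrix (Fin dA × Fin dB) (Fin dA × Fin dB) ℂ, (N X).trace = X.trace) :
    (choiMatrix N).trace = (dA * dB : ℕ) := by
  have : (choiMatrix N).trace
      = ∑ i : Fin dA × Fin dB, (N (Matrix.single i i 1)).trace := by
    simp [Matrix.trace, Matrix.diag, choiMatrix, Fintype.sum_prod_type]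
  rw [this]
  simp only [hTP]
  simp [Matrix.trace, Matrix.diag, Matrix.single, Fintype.sum_prod_type]

/-- Non-negativity of β for bipartite channels: if `𝒩` is a bipartite
quantum channel (completely positive and trace preserving), `λ ≥ 0`, and Hermitian `S, V`
satisfy `(1/d_A) Tr_{AA'B'}[S] ≤ λ I_B`, `T_{BB'}(V ± Γ^𝒩) ≥ 0`, and `S ± V ≥ 0`,
then `λ ≥ 1`. -/
theorem bipartite_beta_nonneg {dA dB dA' dB' : ℕ}
    (hdA : 0 < dA) (hdB : 0 < dB) (hdA' : 0 < dA') (hdB' : 0 < dB')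
    (N : Matrix (Fin dA × Fin dB) (Fin dA × Fin dB) ℂ →ₗ[ℂ]
         Matrix (Fin dA' × Fin dB') (Fin dA' × Fin dB') ℂ)
    (hCP : (choiMatrix N).PosSemidef)
    (hTP : ∀ X : Matrix (Fin dA × Fin dB) (Fin dA × Fin dB) ℂ, (N X).trace = X.trace)
    (lam : ℝ) (hlam : 0 ≤ lam)
    (S V : Matrix ((Fin dA × Fin dB) × (Fin dA' × Fin dB'))
                 ((Fin dA × Fin dB) × (Fin dA' × Fin dB')) ℂ)
    (hS : S.IsHermitian) (hV : V.IsHermitian)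
    (hObj : (((lam : ℂ) • (1 : Matrix (Fin dB) (Fin dB) ℂ))
              - ((dA : ℂ))⁻¹ • partialTraceAA'B' S).PosSemidef)
    (h1 : (partialTransposeBB' (V + choiMatrix N)).PosSemidef)
    (h2 : (partialTransposeBB' (V - choiMatrix N)).PosSemidef)
    (h3 : (S + V).PosSemidef)
    (h4 : (S - V).PosSemidef) :
    1 ≤ lam := by
  have t2 := psd_trace_nonneg h2
  rw [pt_trace, Matrix.trace_sub, choi_trace N hTP] at t2
  have t4 := psd_trace_nonneg h4
  rw [Matrix.trace_sub] at t4
  have tO := psd_trace_nonneg hObj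
  rw [Matrix.trace_sub, Matrix.trace_smul, Matrix.trace_smul, Matrix.trace_one,
    ptr_trace] at tO
  have r2 : (dA * dB : ℝ) ≤ V.trace.re := by
    have := (Complex.le_def.mp t2).1
    simp at this
    linarith
  have r4 : V.trace.re ≤ S.trace.re := by
    have := (Complex.le_def.mp t4).1
    simp at this
    linarith
  have rO : (dA : ℝ)⁻¹ * S.trace.re ≤ lam * dB := by
    have := (Complex.le_def.mp tO).1
    simp [Complex.sub_re, Complex.mul_re] at this
    linarith
  have hdAR : (0:ℝ) < dA := by exact_mod_cast hdA
  have hdBR : (0:ℝ) < dB := by exact_mod_cast hdB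
  have hS' : (dA * dB : ℝ) ≤ S.trace.re := le_trans r2 r4
  have : (dB : ℝ) ≤ lam * dB := by
    have h := mul_le_mul_of_nonneg_left hS' (le_of_lt (inv_pos.mpr hdAR))
    rw [show (dA:ℝ)⁻¹ * (dA * dB) = dB by field_simp] at h
    linarith
  exact le_of_mul_le_mul_right (by linarith) hdBR
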